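/- Linearity of 0: for any Lineal term t, context Γ and Scalar type T, (1) if Γ ⊢ (0) t : T then T ≡ 0̄, and (2) if Γ ⊢ (t) 0 : T then T ≡ 0̄. -/

import Mathlib

set_option autoImplicit false

namespace Lineal

/-! ### Lineal terms -/

inductive Trm (S : Type) : Type where
  | var : ℕ → Trm S
  | lam : Trm S → Trm S
  | app : Trm S → Trm S → Trm S
  | zero : Trm S
  | smul : S → Trm S → Trm S
  | add : Trm S → Trm S → Trm S

namespace Trm

variable {S : Type}

/-- Basis terms: variables and abstractions. -/
def IsBasis : Trm S → Prop
  | var _ => True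
  | lam _ => True
  | _ => False

/-- de Bruijn shift by `d` of variables `≥ c`. -/
def shift (d : ℕ) : ℕ → Trm S → Trm S
  | c, var k => if k < c then var k else var (k + d)
  | c, lam t => lam (shift d (c + 1) t)
  | c, app t r => app (shift d c t) (shift d c r)
  | _, zero => zero
  | c, smul a t => smul a (shift d c t)
  | c, add t r => add (shift d c t) (shift d c r)

/-- Capture-avoiding substitution `t[s / j]` (de Bruijn). -/
def subst : Trm S → Trm S → ℕ → Trm S
  | var k, s, j => if k = j then s else if j < k then var (k - 1) else var k
  | lam t, s, j => lam (subst t (shift 1 0 s) (j + 1))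
  | app t r, s, j => app (subst t s j) (subst r s j)
  | zero, _, _ => zero
  | smul a t, s, j => smul a (subst t s j)
  | add t r, s, j => add (subst t s j) (subst r s j)

/-- All free variables are `< n`. -/
def ClosedUnder : ℕ → Trm S → Prop
  | n, var k => k < n
  | n, lam t => ClosedUnder (n + 1) t
  | n, app t r => ClosedUnder n t ∧ ClosedUnder n r
  | _, zero => True
  | n, smul _ t => ClosedUnder n t
  | n, add t r => ClosedUnder n t ∧ ClosedUnder n r

/-- Closed terms. -/
def Closed (t : Trm S) : Prop := ClosedUnder 0 t

def size : Trm S → ℕ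
  | var _ => 1
  | lam t => size t + 1
  | app t r => size t + size r + 1
  | zero => 1
  | smul _ t => size t + 1
  | add t r => size t + size r + 1

/-- `(t) r₁ … rₙ`. -/
def appList (t : Trm S) (l : List (Trm S)) : Trm S := l.foldl app t

/-- `t + u₁ + … + uₙ`. -/
def sumList (t : Trm S) (l : List (Trm S)) : Trm S := l.foldl add t

/-- Lifting of a simultaneous substitution under a binder. -/
def msubstLift (ρ : ℕ → Trm S) : ℕ → Trm S
  | 0 => var 0
  | n + 1 => shift 1 0 (ρ n)

/-- Simultaneous substitution of all free variables. -/
def msubst : (ℕ → Trm S) → Trm S → Trm S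
  | ρ, var k => ρ k
  | ρ, lam t => lam (msubst (msubstLift ρ) t)
  | ρ, app t r => app (msubst ρ t) (msubst ρ r)
  | _, zero => zero
  | ρ, smul a t => smul a (msubst ρ t)
  | ρ, add t r => add (msubst ρ t) (msubst ρ r)

end Trm

/-! ### AC equivalence of terms (`+` associative and commutative) -/

inductive ACeq {S : Type} : Trm S → Trm S → Prop
  | refl (t : Trm S) : ACeq t t
  | symm {t u : Trm S} : ACeq t u → ACeq u t
  | trans {t u v : Trm S} : ACeq t u → ACeq u v → ACeq t v
  | comm (t u : Trm S) : ACeq (Trm.add t u) (Trm.add u t)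
  | assoc (t u v : Trm S) : ACeq (Trm.add (Trm.add t u) v) (Trm.add t (Trm.add u v))
  | lamCong {t t' : Trm S} : ACeq t t' → ACeq (Trm.lam t) (Trm.lam t')
  | appCong {t t' r r' : Trm S} : ACeq t t' → ACeq r r' → ACeq (Trm.app t r) (Trm.app t' r')
  | smulCong (a : S) {t t' : Trm S} : ACeq t t' → ACeq (Trm.smul a t) (Trm.smul a t')
  | addCong {t t' r r' : Trm S} : ACeq t t' → ACeq r r' → ACeq (Trm.add t r) (Trm.add t' r')

/-! ### Reduction -/

/-- `t` is closed and normal (w.r.t. the step relation `St`). -/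
def ClosedNormal {S : Type} (St : Trm S → Trm S → Prop) (t : Trm S) : Prop :=
  t.Closed ∧ ∀ u, ¬ St t u

/-- Root rules and one-level contextual closure, parameterised by the step relation `St`
used on proper subterms (both for congruence and for the closed-normal side conditions). -/
inductive Core {S : Type} [CommRing S] (St : Trm S → Trm S → Prop) : Trm S → Trm S → Prop
  -- Elementary rules
  | addZero (t : Trm S) : Core St (Trm.add t Trm.zero) t
  | zeroSmul (t : Trm S) : Core St (Trm.smul 0 t) Trm.zero
  | oneSmul (t : Trm S) : Core St (Trm.smul 1 t) t
  | smulZero (a : S) : Core St (Trm.smul a Trm.zero) Trm.zero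
  | smulSmul (a b : S) (t : Trm S) : Core St (Trm.smul a (Trm.smul b t)) (Trm.smul (a * b) t)
  | smulAdd (a : S) (t r : Trm S) :
      Core St (Trm.smul a (Trm.add t r)) (Trm.add (Trm.smul a t) (Trm.smul a r))
  -- Factorisation rules (side condition : t closed normal)
  | fact1 (a b : S) (t : Trm S) : ClosedNormal St t →
      Core St (Trm.add (Trm.smul a t) (Trm.smul b t)) (Trm.smul (a + b) t)
  | fact2 (a : S) (t : Trm S) : ClosedNormal St t →
      Core St (Trm.add (Trm.smul a t) t) (Trm.smul (a + 1) t)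
  | fact3 (t : Trm S) : ClosedNormal St t →
      Core St (Trm.add t t) (Trm.smul (1 + 1) t)
  -- Application rules
  | appAddL (t r u : Trm S) : ClosedNormal St (Trm.add t r) →
      Core St (Trm.app (Trm.add t r) u) (Trm.add (Trm.app t u) (Trm.app r u))
  | appAddR (u t r : Trm S) : ClosedNormal St (Trm.add t r) →
      Core St (Trm.app u (Trm.add t r)) (Trm.add (Trm.app u t) (Trm.app u r))
  | appSmulL (a : S) (t r : Trm S) : ClosedNormal St t →
      Core St (Trm.app (Trm.smul a t) r) (Trm.smul a (Trm.app t r))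
  | appSmulR (a : S) (r t : Trm S) : ClosedNormal St t →
      Core St (Trm.app r (Trm.smul a t)) (Trm.smul a (Trm.app r t))
  | appZeroL (t : Trm S) : Core St (Trm.app Trm.zero t) Trm.zero
  | appZeroR (t : Trm S) : Core St (Trm.app t Trm.zero) Trm.zero
  -- Beta reduction (b a basis term)
  | beta (t b : Trm S) : Trm.IsBasis b → Core St (Trm.app (Trm.lam t) b) (Trm.subst t b 0)
  -- Contextual closure
  | lamCong {t t' : Trm S} : St t t' → Core St (Trm.lam t) (Trm.lam t')
  | appL {t t' : Trm S} (r : Trm S) : St t t' → Core St (Trm.app t r) (Trm.app t' r)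
  | appR (t : Trm S) {r r' : Trm S} : St r r' → Core St (Trm.app t r) (Trm.app t r')
  | smulCong (a : S) {t t' : Trm S} : St t t' → Core St (Trm.smul a t) (Trm.smul a t')
  | addL {t t' : Trm S} (r : Trm S) : St t t' → Core St (Trm.add t r) (Trm.add t' r)
  | addR (t : Trm S) {r r' : Trm S} : St r r' → Core St (Trm.add t r) (Trm.add t r')

/-- Stratified step relation: `StepN n` is the one-step reduction (modulo AC),
adequate for terms of size at most `n`. -/
def StepN {S : Type} [CommRing S] : ℕ → Trm S → Trm S → Prop
  | 0, _, _ => False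
  | n + 1, t, t' => ∃ u u', ACeq t u ∧ Core (StepN n) u u' ∧ ACeq u' t'

/-- One-step reduction of Lineal, on terms considered modulo AC of `+`. -/
def Step {S : Type} [CommRing S] (t t' : Trm S) : Prop := StepN t.size t t'

/-- Many-step reduction. -/
def RedStar {S : Type} [CommRing S] : Trm S → Trm S → Prop := Relation.ReflTransGen Step

/-- `t` is strongly normalising: every reduction sequence from `t` is finite. -/
def StronglyNormalising {S : Type} [CommRing S] (t : Trm S) : Prop :=
  Acc (fun a b => Step b a) t

/-- The set of strongly normalising terms. -/
def SNset (S : Type) [CommRing S] : Set (Trm S) := { t | StronglyNormalising t }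

end Lineal

namespace Lineal

/-! ### Scalar types -/

inductive STy (S : Type) : Type where
  | var : ℕ → STy S
  | arrow : STy S → STy S → STy S
  | all : STy S → STy S
  | smul : S → STy S → STy S
  | zero : STy S

namespace STy

mutual
  /-- Unit types: `U ::= X | U → T | ∀X.U`. -/
  inductive IsUnit {S : Type} : STy S → Prop
    | var (n : ℕ) : IsUnit (STy.var n)
    | arrow {U T : STy S} : IsUnit U → WF T → IsUnit (STy.arrow U T)
    | all {U : STy S} : IsUnit U → IsUnit (STy.all U)
  /-- Scalar types: `T ::= U | ∀X.T | α.T | 0̄`. -/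
  inductive WF {S : Type} : STy S → Prop
    | unit {U : STy S} : IsUnit U → WF U
    | all {T : STy S} : WF T → WF (STy.all T)
    | smul (a : S) {T : STy S} : WF T → WF (STy.smul a T)
    | zero : WF STy.zero
end

variable {S : Type}

/-- de Bruijn shift of type variables. -/
def shiftTV (d : ℕ) : ℕ → STy S → STy S
  | c, var k => if k < c then var k else var (k + d)
  | c, arrow A B => arrow (shiftTV d c A) (shiftTV d c B)
  | c, all T => all (shiftTV d (c + 1) T)
  | c, smul a T => smul a (shiftTV d c T)
  | _, zero => zero

/-- `T[U / j]`: capture-avoiding substitution for the type variable `j` (removing it). -/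
def substTV : STy S → STy S → ℕ → STy S
  | var k, U, j => if k = j then shiftTV j 0 U else if j < k then var (k - 1) else var k
  | arrow A B, U, j => arrow (substTV A U j) (substTV B U j)
  | all T, U, j => all (substTV T U (j + 1))
  | smul a T, U, j => smul a (substTV T U j)
  | zero, _, _ => zero

/-- Abstract the free type variable `n` of `T` (at depth `c`), so that
`all (closeTV T n 0)` is `∀X.T` where `X` is the free variable `n`. -/
def closeTV : STy S → ℕ → ℕ → STy S
  | var k, n, c => if k < c then var k else if k = n + c then var c else var (k + 1)
  | arrow A B, n, c => arrow (closeTV A n c) (closeTV B n c)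
  | all T, n, c => all (closeTV T n (c + 1))
  | smul a T, n, c => smul a (closeTV T n c)
  | zero, _, _ => zero

/-- `T[U / X]` for a *free* type variable named `n` (no binder is removed). -/
def substFreeAux : STy S → ℕ → STy S → ℕ → STy S
  | var k, n, U, c => if k = n + c then shiftTV c 0 U else var k
  | arrow A B, n, U, c => arrow (substFreeAux A n U c) (substFreeAux B n U c)
  | all T, n, U, c => all (substFreeAux T n U (c + 1))
  | smul a T, n, U, c => smul a (substFreeAux T n U c)
  | zero, _, _, _ => zero

def substFree (T : STy S) (n : ℕ) (U : STy S) : STy S := substFreeAux T n U 0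

/-- Free type variables. -/
def ftvAux : STy S → ℕ → Finset ℕ
  | var k, c => if k < c then ∅ else {k - c}
  | arrow A B, c => ftvAux A c ∪ ftvAux B c
  | all T, c => ftvAux T (c + 1)
  | smul _ T, c => ftvAux T c
  | zero, _ => ∅

def ftv (T : STy S) : Finset ℕ := ftvAux T 0

end STy

/-- Free type variables of a context. -/
def ftvCtx {S : Type} (Γ : List (STy S)) : Finset ℕ :=
  Γ.foldr (fun T s => T.ftv ∪ s) ∅

/-- Type equivalence `≡`: the least congruence with
`α.0̄ ≡ 0̄`, `0.T ≡ 0̄`, `1.T ≡ T`, `α.(β.T) ≡ (α×β).T`, `∀X.α.T ≡ α.∀X.T`. -/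
inductive SEq {S : Type} [CommRing S] : STy S → STy S → Prop
  | refl (T : STy S) : SEq T T
  | symm {T T' : STy S} : SEq T T' → SEq T' T
  | trans {T T' T'' : STy S} : SEq T T' → SEq T' T'' → SEq T T''
  | smulZero (a : S) : SEq (STy.smul a STy.zero) STy.zero
  | zeroSmul (T : STy S) : SEq (STy.smul 0 T) STy.zero
  | oneSmul (T : STy S) : SEq (STy.smul 1 T) T
  | smulSmul (a b : S) (T : STy S) : SEq (STy.smul a (STy.smul b T)) (STy.smul (a * b) T)
  | allSmul (a : S) (T : STy S) : SEq (STy.all (STy.smul a T)) (STy.smul a (STy.all T))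
  | arrowCong {U U' T T' : STy S} : SEq U U' → SEq T T' → SEq (STy.arrow U T) (STy.arrow U' T')
  | allCong {T T' : STy S} : SEq T T' → SEq (STy.all T) (STy.all T')
  | smulCong (a : S) {T T' : STy S} : SEq T T' → SEq (STy.smul a T) (STy.smul a T')

/-- `T ≺ R` iff either `R ≡ ∀X.T`, or `T ≡ ∀X.S` and `R ≡ S[U/X]` for some unit type `U`. -/
def Prec {S : Type} [CommRing S] (T R : STy S) : Prop :=
  (∃ n : ℕ, SEq R (STy.all (STy.closeTV T n 0))) ∨
  (∃ Sb U : STy S, STy.IsUnit U ∧ SEq T (STy.all Sb) ∧ SEq R (STy.substTV Sb U 0))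

/-- `⪯` : reflexive and transitive closure of `≺`. -/
def PrecEq {S : Type} [CommRing S] : STy S → STy S → Prop := Relation.ReflTransGen Prec

/-! ### The Scalar typing judgment -/

inductive Typ {S : Type} [CommRing S] : List (STy S) → Trm S → STy S → Prop
  | ax {Γ : List (STy S)} {n : ℕ} {U : STy S} : Γ[n]? = some U → Typ Γ (Trm.var n) U
  | equiv {Γ : List (STy S)} {t : Trm S} {T T' : STy S} : Typ Γ t T → SEq T T' → Typ Γ t T'
  | arrE {Γ : List (STy S)} {t r : Trm S} {U T : STy S} {a b : S} :
      Typ Γ t (STy.smul a (STy.arrow U T)) → Typ Γ r (STy.smul b U) →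
      Typ Γ (Trm.app t r) (STy.smul (a * b) T)
  | arrI {Γ : List (STy S)} {t : Trm S} {U T : STy S} :
      STy.IsUnit U → Typ (U :: Γ) t T → Typ Γ (Trm.lam t) (STy.arrow U T)
  | allE {Γ : List (STy S)} {t : Trm S} {T U : STy S} :
      Typ Γ t (STy.all T) → STy.IsUnit U → Typ Γ t (STy.substTV T U 0)
  | allI {Γ : List (STy S)} {t : Trm S} {T : STy S} :
      Typ (Γ.map (STy.shiftTV 1 0)) t T → Typ Γ t (STy.all T)
  | ax0 {Γ : List (STy S)} : Typ Γ Trm.zero STy.zero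
  | addI {Γ : List (STy S)} {t r : Trm S} {T : STy S} {a b : S} :
      Typ Γ t (STy.smul a T) → Typ Γ r (STy.smul b T) →
      Typ Γ (Trm.add t r) (STy.smul (a + b) T)
  | smulI {Γ : List (STy S)} {t : Trm S} {T : STy S} (a : S) :
      Typ Γ t T → Typ Γ (Trm.smul a t) (STy.smul a T)

/-! ### λ2^la -/

inductive FTy : Type where
  | var : ℕ → FTy
  | arrow : FTy → FTy → FTy
  | all : FTy → FTy

namespace FTy

def shiftTV (d : ℕ) : ℕ → FTy → FTy
  | c, var k => if k < c then var k else var (k + d)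
  | c, arrow A B => arrow (shiftTV d c A) (shiftTV d c B)
  | c, all A => all (shiftTV d (c + 1) A)

def substTV : FTy → FTy → ℕ → FTy
  | var k, B, j => if k = j then shiftTV j 0 B else if j < k then var (k - 1) else var k
  | arrow A C, B, j => arrow (substTV A B j) (substTV C B j)
  | all A, B, j => all (substTV A B (j + 1))

end FTy

/-- The typing judgment of λ2^la : System F rules over Lineal terms plus
`ax0`, `+I` and `sI`. -/
inductive FTyp {S : Type} [CommRing S] : List FTy → Trm S → FTy → Prop
  | ax {Γ : List FTy} {n : ℕ} {A : FTy} : Γ[n]? = some A → FTyp Γ (Trm.var n) A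
  | arrE {Γ : List FTy} {t r : Trm S} {A B : FTy} :
      FTyp Γ t (FTy.arrow A B) → FTyp Γ r A → FTyp Γ (Trm.app t r) B
  | arrI {Γ : List FTy} {t : Trm S} {A B : FTy} :
      FTyp (A :: Γ) t B → FTyp Γ (Trm.lam t) (FTy.arrow A B)
  | allE {Γ : List FTy} {t : Trm S} {A : FTy} (B : FTy) :
      FTyp Γ t (FTy.all A) → FTyp Γ t (FTy.substTV A B 0)
  | allI {Γ : List FTy} {t : Trm S} {A : FTy} :
      FTyp (Γ.map (FTy.shiftTV 1 0)) t A → FTyp Γ t (FTy.all A)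
  | ax0 {Γ : List FTy} (A : FTy) : FTyp Γ Trm.zero A
  | addI {Γ : List FTy} {t r : Trm S} {A : FTy} :
      FTyp Γ t A → FTyp Γ r A → FTyp Γ (Trm.add t r) A
  | smulI {Γ : List FTy} {t : Trm S} {A : FTy} (a : S) :
      FTyp Γ t A → FTyp Γ (Trm.smul a t) A

/-! ### Saturated sets and the interpretation of λ2^la types -/

/-- Saturated subsets of SN. -/
structure IsSaturated {S : Type} [CommRing S] (X : Set (Trm S)) : Prop where
  subset_sn : X ⊆ SNset S
  var_app : ∀ (n : ℕ) (l : List (Trm S)), (∀ u ∈ l, u ∈ SNset S) →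
      Trm.appList (Trm.var n) l ∈ X
  beta_exp : ∀ (v b : Trm S) (l : List (Trm S)), b.IsBasis →
      Trm.appList (Trm.subst v b 0) l ∈ X → Trm.appList (Trm.app (Trm.lam v) b) l ∈ X
  add_mem : ∀ {t u : Trm S}, t ∈ X → u ∈ X → Trm.add t u ∈ X
  smul_iff : ∀ (a : S) (t : Trm S), t ∈ X ↔ Trm.smul a t ∈ X
  sum_app : ∀ (u : Trm S) (us l : List (Trm S)),
      (∀ v ∈ u :: us, Trm.appList v l ∈ X) → Trm.appList (Trm.sumList u us) l ∈ X
  app_sum : ∀ (t v : Trm S) (vs l : List (Trm S)),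
      (∀ w ∈ v :: vs, Trm.appList (Trm.app t w) l ∈ X) →
      Trm.appList (Trm.app t (Trm.sumList v vs)) l ∈ X
  smul_head : ∀ (a : S) (t : Trm S) (l : List (Trm S)),
      Trm.smul a (Trm.appList t l) ∈ X ↔ Trm.appList (Trm.smul a t) l ∈ X
  smul_arg : ∀ (a : S) (t : Trm S) (l₁ : List (Trm S)) (u : Trm S) (l₂ : List (Trm S)),
      Trm.smul a (Trm.appList t (l₁ ++ u :: l₂)) ∈ X ↔
      Trm.appList t (l₁ ++ Trm.smul a u :: l₂) ∈ X
  zero_mem : Trm.zero ∈ X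
  zero_app : ∀ l : List (Trm S), (∀ u ∈ l, u ∈ SNset S) → Trm.appList Trm.zero l ∈ X
  app_zero : ∀ (t : Trm S) (l : List (Trm S)), t ∈ SNset S → (∀ u ∈ l, u ∈ SNset S) →
      Trm.appList (Trm.app t Trm.zero) l ∈ X

/-- Extension of a type-variable valuation (de Bruijn). -/
def consVal {S : Type} (Y : Set (Trm S)) (ξ : ℕ → Set (Trm S)) : ℕ → Set (Trm S)
  | 0 => Y
  | n + 1 => ξ n

/-- Interpretation `⟦A⟧_ξ` of a λ2^la type. -/
def FTy.interp {S : Type} [CommRing S] : FTy → (ℕ → Set (Trm S)) → Set (Trm S)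
  | FTy.var n, ξ => ξ n
  | FTy.arrow A B, ξ => { F | ∀ s ∈ interp A ξ, Trm.app F s ∈ interp B ξ }
  | FTy.all A, ξ => ⋂ Y ∈ { X : Set (Trm S) | IsSaturated X }, interp A (consVal Y ξ)

/-- `ρ, ξ ⊨ Γ`. -/
def SatCtx {S : Type} [CommRing S] (ρ : ℕ → Trm S) (ξ : ℕ → Set (Trm S))
    (Γ : List FTy) : Prop :=
  ∀ (n : ℕ) (A : FTy), Γ[n]? = some A → ρ n ∈ FTy.interp A ξ

/-- The `♮` map erasing scalars, sending `0̄` to a fixed λ2^la type `A`. -/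
def STy.flat {S : Type} (A : FTy) : STy S → FTy
  | STy.var n => FTy.var n
  | STy.arrow U T => FTy.arrow (flat A U) (flat A T)
  | STy.all T => FTy.all (flat A T)
  | STy.smul _ T => flat A T
  | STy.zero => A

end Lineal
namespace Lineal

section Aux

set_option linter.unusedSectionVars false

open scoped Classical

variable {S : Type} [CommRing S]

/-- The global scalar factor of a type. -/
def sc : STy S → S
  | STy.var _ => 1
  | STy.arrow _ _ => 1
  | STy.all T => sc T
  | STy.smul a T => a * sc T
  | STy.zero => 0

lemma sc_SEq {T T' : STy S} (h : SEq T T') : sc T = sc T' := by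
  induction h with
  | refl => rfl
  | symm _ ih => exact ih.symm
  | trans _ _ ih1 ih2 => exact ih1.trans ih2
  | smulZero a => simp [sc]
  | zeroSmul T => simp [sc]
  | oneSmul T => simp [sc]
  | smulSmul a b T => simp [sc, mul_assoc]
  | allSmul a T => simp [sc]
  | arrowCong => rfl
  | allCong _ ih => simpa [sc] using ih
  | smulCong a _ ih => simp [sc, ih]

lemma sc_shiftTV (d c : ℕ) (T : STy S) : sc (STy.shiftTV d c T) = sc T := by
  induction T generalizing c with
  | var k => simp only [STy.shiftTV]; split <;> rfl
  | arrow A B ihA ihB => rfl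
  | all T ih => simpa [STy.shiftTV, sc] using ih (c + 1)
  | smul a T ih => simp [STy.shiftTV, sc, ih]
  | zero => rfl

lemma sc_unit {U : STy S} (h : STy.IsUnit U) : sc U = 1 := by
  induction U with
  | var n => rfl
  | arrow A B ihA ihB => rfl
  | all T ih => cases h with | all hU => simpa [sc] using ih hU
  | smul a T ih => cases h
  | zero => cases h

lemma sc_substTV {U : STy S} (hU : STy.IsUnit U) (T : STy S) (j : ℕ) :
    sc (STy.substTV T U j) = sc T := by
  induction T generalizing j with
  | var k =>
    simp only [STy.substTV]
    split
    · rw [sc_shiftTV, sc_unit hU]; rfl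
    · split <;> rfl
  | arrow A B ihA ihB => rfl
  | all T ih => simpa [STy.substTV, sc] using ih (j + 1)
  | smul a T ih => simp [STy.substTV, sc, ih]
  | zero => rfl

lemma exists_smul_sc (T : STy S) : ∃ U : STy S, SEq T (STy.smul (sc T) U) := by
  induction T with
  | var k => exact ⟨STy.var k, (SEq.oneSmul _).symm⟩
  | arrow A B ihA ihB => exact ⟨STy.arrow A B, (SEq.oneSmul _).symm⟩
  | all T ih =>
    obtain ⟨U, hU⟩ := ih
    exact ⟨STy.all U, ((SEq.allCong hU).trans (SEq.allSmul _ _))⟩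
  | smul a T ih =>
    obtain ⟨U, hU⟩ := ih
    exact ⟨U, (SEq.smulCong a hU).trans (SEq.smulSmul _ _ _)⟩
  | zero => exact ⟨STy.zero, (SEq.zeroSmul _).symm⟩

lemma SEq_zero_of_sc {T : STy S} (h : sc T = 0) : SEq T STy.zero := by
  obtain ⟨U, hU⟩ := exists_smul_sc T
  rw [h] at hU
  exact hU.trans (SEq.zeroSmul U)

/-! #### Preservation of unit/WF under shifting and unit substitution -/

lemma unitwf_shift (d : ℕ) (T : STy S) : ∀ c : ℕ,
    (STy.IsUnit T → STy.IsUnit (STy.shiftTV d c T)) ∧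
    (STy.WF T → STy.WF (STy.shiftTV d c T)) := by
  induction T with
  | var k =>
    intro c
    constructor <;> intro _ <;> simp only [STy.shiftTV] <;> split
    · exact STy.IsUnit.var _
    · exact STy.IsUnit.var _
    · exact STy.WF.unit (STy.IsUnit.var _)
    · exact STy.WF.unit (STy.IsUnit.var _)
  | arrow A B ihA ihB =>
    intro c
    have key : STy.IsUnit (STy.arrow A B) → STy.IsUnit (STy.shiftTV d c (STy.arrow A B)) := by
      intro h
      cases h with
      | arrow hA hB =>
        exact STy.IsUnit.arrow ((ihA c).1 hA) ((ihB c).2 hB)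
    refine ⟨key, fun h => ?_⟩
    cases h with
    | unit hU => exact STy.WF.unit (key hU)
  | all T ih =>
    intro c
    have key : STy.IsUnit (STy.all T) → STy.IsUnit (STy.shiftTV d c (STy.all T)) := by
      intro h
      cases h with
      | all hU => exact STy.IsUnit.all ((ih (c + 1)).1 hU)
    refine ⟨key, fun h => ?_⟩
    cases h with
    | unit hU => exact STy.WF.unit (key hU)
    | all hW => exact STy.WF.all ((ih (c + 1)).2 hW)
  | smul a T ih =>
    intro c
    refine ⟨fun h => ?_, fun h => ?_⟩
    · cases h
    · cases h with
      | unit hU => cases hU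
      | smul _ hW => exact STy.WF.smul a ((ih c).2 hW)
  | zero =>
    intro c
    refine ⟨fun h => ?_, fun _ => STy.WF.zero⟩
    cases h

lemma unitwf_subst {U : STy S} (hU : STy.IsUnit U) (T : STy S) : ∀ j : ℕ,
    (STy.IsUnit T → STy.IsUnit (STy.substTV T U j)) ∧
    (STy.WF T → STy.WF (STy.substTV T U j)) := by
  induction T with
  | var k =>
    intro j
    have key : STy.IsUnit (STy.substTV (STy.var k) U j) := by
      simp only [STy.substTV]
      split
      · exact (unitwf_shift j U 0).1 hU
      · split
        · exact STy.IsUnit.var _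
        · exact STy.IsUnit.var _
    exact ⟨fun _ => key, fun _ => STy.WF.unit key⟩
  | arrow A B ihA ihB =>
    intro j
    have key : STy.IsUnit (STy.arrow A B) → STy.IsUnit (STy.substTV (STy.arrow A B) U j) := by
      intro h
      cases h with
      | arrow hA hB => exact STy.IsUnit.arrow ((ihA j).1 hA) ((ihB j).2 hB)
    refine ⟨key, fun h => ?_⟩
    cases h with
    | unit hU' => exact STy.WF.unit (key hU')
  | all T ih =>
    intro j
    have key : STy.IsUnit (STy.all T) → STy.IsUnit (STy.substTV (STy.all T) U j) := by
      intro h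
      cases h with
      | all hU' => exact STy.IsUnit.all ((ih (j + 1)).1 hU')
    refine ⟨key, fun h => ?_⟩
    cases h with
    | unit hU' => exact STy.WF.unit (key hU')
    | all hW => exact STy.WF.all ((ih (j + 1)).2 hW)
  | smul a T ih =>
    intro j
    refine ⟨fun h => ?_, fun h => ?_⟩
    · cases h
    · cases h with
      | unit hU' => cases hU'
      | smul _ hW => exact STy.WF.smul a ((ih j).2 hW)
  | zero =>
    intro j
    refine ⟨fun h => ?_, fun _ => STy.WF.zero⟩
    cases h

/-- `SEq` is substitutive. -/
lemma SEq_substTV {V : STy S} {A B : STy S} (h : SEq A B) :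
    ∀ j : ℕ, SEq (STy.substTV A V j) (STy.substTV B V j) := by
  induction h with
  | refl _ => exact fun j => SEq.refl _
  | symm _ ih => exact fun j => (ih j).symm
  | trans _ _ ih1 ih2 => exact fun j => (ih1 j).trans (ih2 j)
  | smulZero a => intro j; simp only [STy.substTV]; exact SEq.smulZero a
  | zeroSmul T => intro j; simp only [STy.substTV]; exact SEq.zeroSmul _
  | oneSmul T => intro j; simp only [STy.substTV]; exact SEq.oneSmul _
  | smulSmul a b T => intro j; simp only [STy.substTV]; exact SEq.smulSmul a b _
  | allSmul a T => intro j; simp only [STy.substTV]; exact SEq.allSmul a _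
  | arrowCong _ _ ih1 ih2 =>
    intro j; simp only [STy.substTV]; exact SEq.arrowCong (ih1 j) (ih2 j)
  | allCong _ ih => intro j; simp only [STy.substTV]; exact SEq.allCong (ih (j + 1))
  | smulCong a _ ih => intro j; simp only [STy.substTV]; exact SEq.smulCong a (ih j)

/-! #### Skeletons and canonical forms -/

mutual
  inductive Skel (S : Type) : Type
    | var : ℕ → Skel S
    | arr : SkelO S → SkelO S → Skel S
    | all : Skel S → Skel S
  inductive SkelO (S : Type) : Type
    | zero : SkelO S
    | sm : S → Skel S → SkelO S
end

noncomputable def norm (a : S) (k : Skel S) : SkelO S :=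
  if a = 0 then SkelO.zero else SkelO.sm a k

noncomputable def canon : STy S → SkelO S
  | STy.var n => norm 1 (Skel.var n)
  | STy.arrow A B => norm 1 (Skel.arr (canon A) (canon B))
  | STy.all T =>
      match canon T with
      | SkelO.zero => SkelO.zero
      | SkelO.sm a k => norm a (Skel.all k)
  | STy.smul a T =>
      match canon T with
      | SkelO.zero => SkelO.zero
      | SkelO.sm b k => norm (a * b) k
  | STy.zero => SkelO.zero

def scO : SkelO S → S
  | SkelO.zero => 0
  | SkelO.sm a _ => a

lemma norm_sm {a : S} {k : Skel S} {b : S} {k' : Skel S}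
    (h : norm a k = SkelO.sm b k') : b = a ∧ a ≠ 0 ∧ k' = k := by
  unfold norm at h
  split at h
  · cases h
  · cases h
    exact ⟨rfl, by assumption, rfl⟩

lemma scO_norm (a : S) (k : Skel S) : scO (norm a k) = a := by
  unfold norm; split
  · simp [scO, *]
  · rfl

lemma scO_canon (T : STy S) : scO (canon T) = sc T := by
  induction T with
  | var n => simp [canon, scO_norm, sc]
  | arrow A B ihA ihB => simp [canon, scO_norm, sc]
  | all T ih =>
    simp only [canon, sc]
    cases h : canon T with
    | zero => rw [h] at ih; exact ih
    | sm b k => rw [h] at ih; rw [scO_norm]; exact ih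
  | smul a T ih =>
    simp only [canon, sc]
    cases h : canon T with
    | zero => rw [h] at ih; simp [scO, ← ih]
    | sm b k => rw [h] at ih; rw [scO_norm, ← ih]; rfl
  | zero => rfl

lemma canon_ne {T : STy S} {a : S} {k : Skel S} (h : canon T = SkelO.sm a k) : a ≠ 0 := by
  cases T with
  | var n => obtain ⟨h1, h2, _⟩ := norm_sm h; exact h1 ▸ h2
  | arrow A B => obtain ⟨h1, h2, _⟩ := norm_sm h; exact h1 ▸ h2
  | all T =>
    revert h; simp only [canon]
    cases canon T with
    | zero => intro h; cases h
    | sm b k' => intro h; obtain ⟨h1, h2, _⟩ := norm_sm h; exact h1 ▸ h2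
  | smul c T =>
    revert h; simp only [canon]
    cases canon T with
    | zero => intro h; cases h
    | sm b k' => intro h; obtain ⟨h1, h2, _⟩ := norm_sm h; exact h1 ▸ h2
  | zero => cases h

lemma canon_eq_zero {T : STy S} (h : sc T = 0) : canon T = SkelO.zero := by
  cases hc : canon T with
  | zero => rfl
  | sm a k =>
    have h2 : scO (canon T) = a := by rw [hc]; rfl
    rw [scO_canon, h] at h2
    exact absurd h2.symm (canon_ne hc)

lemma canon_SEq {T T' : STy S} (h : SEq T T') : canon T = canon T' := by
  induction h with
  | refl => rfl
  | symm _ ih => exact ih.symm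
  | trans _ _ ih1 ih2 => exact ih1.trans ih2
  | smulZero a => simp [canon]
  | zeroSmul T =>
    simp only [canon]
    cases canon T with
    | zero => rfl
    | sm b k => simp [norm]
  | oneSmul T =>
    simp only [canon]
    cases h : canon T with
    | zero => rfl
    | sm b k => simp [norm, canon_ne h]
  | smulSmul a b T =>
    cases h : canon T with
    | zero => simp [canon, h]
    | sm c k =>
      simp only [canon, h]
      by_cases hbc : b * c = 0
      · simp [norm, hbc, mul_assoc]
      · simp [norm, hbc, mul_assoc]
  | allSmul a T =>
    cases h : canon T with
    | zero => simp [canon, h]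
    | sm c k =>
      have hc := canon_ne h
      simp only [canon, h]
      by_cases hac : a * c = 0
      · simp [norm, hc, hac]
      · simp [norm, hc, hac]
  | arrowCong _ _ ih1 ih2 => simp [canon, ih1, ih2]
  | allCong _ ih => simp [canon, ih]
  | smulCong a _ ih => simp [canon, ih]

/-! #### Good skeletons (canonical forms of well-formed types) -/

mutual
  inductive GoodSk : Skel S → Prop
    | var (n : ℕ) : GoodSk (Skel.var n)
    | arr {k₁ : Skel S} {d₂ : SkelO S} :
        GoodSk k₁ → GoodO d₂ → GoodSk (Skel.arr (SkelO.sm 1 k₁) d₂)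
    | all {k : Skel S} : GoodSk k → GoodSk (Skel.all k)
  inductive GoodO : SkelO S → Prop
    | zero : GoodO SkelO.zero
    | sm (a : S) {k : Skel S} : GoodSk k → GoodO (SkelO.sm a k)
end

lemma goodO_norm {a : S} {k : Skel S} (h : GoodSk k) : GoodO (norm a k) := by
  unfold norm; split
  · exact GoodO.zero
  · exact GoodO.sm a h

mutual
  def toSk : Skel S → STy S
    | Skel.var n => STy.var n
    | Skel.arr d₁ d₂ => STy.arrow (toDom d₁) (toTy d₂)
    | Skel.all k => STy.all (toSk k)
  def toDom : SkelO S → STy S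
    | SkelO.zero => STy.var 0
    | SkelO.sm _ k => toSk k
  def toTy : SkelO S → STy S
    | SkelO.zero => STy.zero
    | SkelO.sm a k => STy.smul a (toSk k)
end

mutual
  theorem toSk_unit : ∀ {k : Skel S}, GoodSk k → STy.IsUnit (toSk k)
    | _, GoodSk.var n => STy.IsUnit.var n
    | _, GoodSk.arr hk₁ hd₂ => STy.IsUnit.arrow (toSk_unit hk₁) (toTy_wf hd₂)
    | _, GoodSk.all hk => STy.IsUnit.all (toSk_unit hk)
  theorem toTy_wf : ∀ {d : SkelO S}, GoodO d → STy.WF (toTy d)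
    | _, GoodO.zero => STy.WF.zero
    | _, GoodO.sm a hk => STy.WF.smul a (STy.WF.unit (toSk_unit hk))
end

lemma good_of_wf (T : STy S) :
    (STy.IsUnit T → ∀ {a : S} {k : Skel S}, canon T = SkelO.sm a k → a = 1 ∧ GoodSk k) ∧
    (STy.WF T → GoodO (canon T)) := by
  induction T with
  | var n =>
    constructor
    · intro _ a k h
      obtain ⟨h1, _, h3⟩ := norm_sm h
      exact ⟨h1, h3 ▸ GoodSk.var n⟩
    · intro _
      exact goodO_norm (GoodSk.var n)
  | arrow A B ihA ihB =>
    have key : STy.IsUnit (STy.arrow A B) →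
        ∀ {a : S} {k : Skel S}, canon (STy.arrow A B) = SkelO.sm a k → a = 1 ∧ GoodSk k := by
      intro hU a k h
      cases hU with
      | arrow hA hB =>
        obtain ⟨h1, hne, h3⟩ := norm_sm h
        subst h3
        refine ⟨h1, ?_⟩
        have hscA : scO (canon A) = 1 := by rw [scO_canon, sc_unit hA]
        cases hA2 : canon A with
        | zero => rw [hA2] at hscA; exact absurd hscA.symm hne
        | sm a' kA =>
          rw [hA2] at hscA
          have ha' : a' = 1 := hscA
          subst ha'
          exact GoodSk.arr (ihA.1 hA hA2).2 (ihB.2 hB)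
    refine ⟨key, ?_⟩
    intro hW
    cases hW with
    | unit hU =>
      cases hc : canon (STy.arrow A B) with
      | zero => exact GoodO.zero
      | sm a k => exact GoodO.sm a (key hU hc).2
  | all T ih =>
    constructor
    · intro hU a k h
      cases hU with
      | all hU' =>
        revert h; simp only [canon]
        cases hT : canon T with
        | zero => intro h; cases h
        | sm b k' =>
          intro h
          obtain ⟨h1, hne, h3⟩ := norm_sm h
          obtain ⟨hb1, hgk⟩ := ih.1 hU' hT
          exact ⟨h1.trans hb1, h3 ▸ GoodSk.all hgk⟩
    · intro hW
      have hWT : STy.WF T := by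
        cases hW with
        | unit hU => cases hU with | all hU' => exact STy.WF.unit hU'
        | all hWT => exact hWT
      have hg := ih.2 hWT
      simp only [canon]
      cases hT : canon T with
      | zero => exact GoodO.zero
      | sm b k' =>
        rw [hT] at hg
        cases hg with
        | sm _ hk => exact goodO_norm (GoodSk.all hk)
  | smul a T ih =>
    constructor
    · intro hU; cases hU
    · intro hW
      have hWT : STy.WF T := by
        cases hW with
        | unit hU => cases hU
        | smul _ hWT => exact hWT
      have hg := ih.2 hWT
      simp only [canon]
      cases hT : canon T with
      | zero => exact GoodO.zero
      | sm b k =>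
        rw [hT] at hg
        cases hg with
        | sm _ hk => exact goodO_norm hk
  | zero =>
    refine ⟨fun hU => ?_, fun _ => GoodO.zero⟩
    cases hU

lemma nf_correct (T : STy S) (hg : GoodO (canon T)) : SEq T (toTy (canon T)) := by
  induction T with
  | var n =>
    by_cases h1 : (1 : S) = 0
    · have hz : canon (STy.var n) = SkelO.zero :=
        canon_eq_zero (S := S) (T := STy.var n) (by simpa [sc] using h1)
      rw [hz]
      exact SEq_zero_of_sc (by simpa [sc] using h1)
    · simp only [canon, norm, if_neg h1, toTy, toSk]
      exact (SEq.oneSmul _).symm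
  | arrow A B ihA ihB =>
    by_cases h1 : (1 : S) = 0
    · have hz : canon (STy.arrow A B) = SkelO.zero :=
        canon_eq_zero (by simpa [sc] using h1)
      rw [hz]
      exact SEq_zero_of_sc (by simpa [sc] using h1)
    · have hc : canon (STy.arrow A B) = SkelO.sm 1 (Skel.arr (canon A) (canon B)) := by
        simp [canon, norm, h1]
      rw [hc] at hg ⊢
      cases hA : canon A with
      | zero =>
        rw [hA] at hg
        cases hg with
        | sm _ hk => cases hk
      | sm a' kA =>
        rw [hA] at hg
        cases hg with
        | sm _ hk =>
          cases hk with
          | arr hk₁ hd₂ =>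
            have hA' : SEq A (toSk kA) := by
              have := ihA (by rw [hA]; exact GoodO.sm _ hk₁)
              rw [hA] at this
              exact this.trans (SEq.oneSmul _)
            have hB' : SEq B (toTy (canon B)) := ihB hd₂
            simp only [toTy, toDom, toSk]
            exact (SEq.arrowCong hA' hB').trans (SEq.oneSmul _).symm
  | all T ih =>
    cases hT : canon T with
    | zero =>
      have hz : canon (STy.all T) = SkelO.zero := by simp [canon, hT]
      rw [hz]
      refine SEq_zero_of_sc ?_
      have := scO_canon T
      rw [hT] at this
      simpa [sc, scO] using this.symm
    | sm c k =>
      have hc := canon_ne hT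
      have hall : canon (STy.all T) = SkelO.sm c (Skel.all k) := by
        simp [canon, hT, norm, hc]
      rw [hall] at hg ⊢
      cases hg with
      | sm _ hk =>
        cases hk with
        | all hk' =>
          have hT' : SEq T (STy.smul c (toSk k)) := by
            have := ih (by rw [hT]; exact GoodO.sm _ hk')
            rw [hT] at this
            simpa only [toTy] using this
          simp only [toTy, toSk]
          exact (SEq.allCong hT').trans (SEq.allSmul _ _)
  | smul a T ih =>
    cases hT : canon T with
    | zero =>
      have hz : canon (STy.smul a T) = SkelO.zero := by simp [canon, hT]
      rw [hz]
      refine SEq_zero_of_sc ?_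
      have := scO_canon T
      rw [hT] at this
      simp [sc, ← this, scO]
    | sm c k =>
      by_cases hac : a * c = 0
      · have hz : canon (STy.smul a T) = SkelO.zero := by simp [canon, hT, norm, hac]
        rw [hz]
        refine SEq_zero_of_sc ?_
        have := scO_canon T
        rw [hT] at this
        simp [sc, ← this, scO, hac]
      · have hsm : canon (STy.smul a T) = SkelO.sm (a * c) k := by
          simp [canon, hT, norm, hac]
        rw [hsm] at hg ⊢
        cases hg with
        | sm _ hk =>
          have hT' : SEq T (STy.smul c (toSk k)) := by
            have := ih (by rw [hT]; exact GoodO.sm _ hk)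
            rw [hT] at this
            simpa only [toTy] using this
          simp only [toTy, toSk]
          exact (SEq.smulCong a hT').trans (SEq.smulSmul _ _ _)
  | zero => exact SEq.refl _

/-! #### Typing invariants -/

lemma typ_good {Γ : List (STy S)} {s : Trm S} {T : STy S} (h : Typ Γ s T)
    (hΓ : ∀ U ∈ Γ, STy.IsUnit U) : GoodO (canon T) := by
  induction h with
  | @ax Γ n U hget =>
    exact (good_of_wf U).2 (STy.WF.unit (hΓ U (List.mem_of_getElem? hget)))
  | equiv _ he ih => rw [← canon_SEq he]; exact ih hΓ
  | @arrE Γ t r U T a b ht hr iht ihr =>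
    cases hT : canon T with
    | zero => simp only [canon, hT]; exact GoodO.zero
    | sm c k =>
      simp only [canon, hT]
      by_cases hz : a * b * c = 0
      · rw [norm, if_pos hz]; exact GoodO.zero
      · rw [norm, if_neg hz]
        refine GoodO.sm _ ?_
        have h1 : ¬ (1 : S) = 0 := by
          intro h1
          exact hz (by rw [← mul_one (a * b * c), h1, mul_zero])
        have ha : ¬ a = 0 := by
          intro ha
          exact hz (by rw [ha, zero_mul, zero_mul])
        have hgt := iht hΓ
        have harr : canon (STy.arrow U T) =
            SkelO.sm 1 (Skel.arr (canon U) (canon T)) := by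
          simp [canon, norm, h1]
        have hsm : canon (STy.smul a (STy.arrow U T)) =
            SkelO.sm a (Skel.arr (canon U) (canon T)) := by
          simp [canon, harr, norm, ha, h1]
        rw [hsm, hT] at hgt
        generalize canon U = dU at hgt
        cases hgt with
        | sm _ hk =>
          cases hk with
          | arr hk₁ hd₂ =>
            cases hd₂ with
            | sm _ hkk => exact hkk
  | @arrI Γ t U T hU ht ih =>
    by_cases h1 : (1 : S) = 0
    · have : canon (STy.arrow U T) = SkelO.zero := by simp [canon, norm, h1]
      rw [this]; exact GoodO.zero
    · have harr : canon (STy.arrow U T) =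
          SkelO.sm 1 (Skel.arr (canon U) (canon T)) := by
        simp [canon, norm, h1]
      rw [harr]
      have hscU : scO (canon U) = 1 := by rw [scO_canon, sc_unit hU]
      cases hU2 : canon U with
      | zero => rw [hU2] at hscU; exact absurd hscU.symm h1
      | sm a' kU =>
        rw [hU2] at hscU
        have ha' : a' = 1 := hscU
        subst ha'
        have hgU := ((good_of_wf U).1 hU hU2).2
        have hgT : GoodO (canon T) := ih (by
          intro V hV
          rcases hV with _ | hV
          · exact hU
          · exact hΓ V (by assumption))
        exact GoodO.sm 1 (GoodSk.arr hgU hgT)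
  | @allE Γ t T U ht hU ih =>
    have hg := ih hΓ
    cases hT : canon T with
    | zero =>
      have hscT : sc T = 0 := by
        have := scO_canon T; rw [hT] at this; exact this.symm
      have : sc (STy.substTV T U 0) = 0 := by rw [sc_substTV hU, hscT]
      rw [canon_eq_zero this]
      exact GoodO.zero
    | sm c k =>
      have hall : canon (STy.all T) = SkelO.sm c (Skel.all k) := by
        simp [canon, hT, norm, canon_ne hT]
      rw [hall] at hg
      have hkk : GoodSk k := by
        cases hg with
        | sm _ hk => cases hk with | all hk' => exact hk'
      have hnf : SEq T (STy.smul c (toSk k)) := by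
        have := nf_correct T (by rw [hT]; exact GoodO.sm _ hkk)
        rw [hT] at this
        simpa only [toTy] using this
      have hsub : SEq (STy.substTV T U 0)
          (STy.smul c (STy.substTV (toSk k) U 0)) := by
        have := SEq_substTV (V := U) hnf 0
        simpa [STy.substTV] using this
      rw [canon_SEq hsub]
      exact (good_of_wf _).2
        (STy.WF.smul c (STy.WF.unit ((unitwf_subst hU (toSk k) 0).1 (toSk_unit hkk))))
  | @allI Γ t T ht ih =>
    have hg : GoodO (canon T) := ih (by
      intro V hV
      rcases List.mem_map.1 hV with ⟨W, hW, rfl⟩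
      exact (unitwf_shift 1 W 0).1 (hΓ W hW))
    cases hT : canon T with
    | zero => simp only [canon, hT]; exact GoodO.zero
    | sm c k =>
      simp only [canon, hT]
      rw [hT] at hg
      cases hg with
      | sm _ hk => exact goodO_norm (GoodSk.all hk)
  | ax0 => exact GoodO.zero
  | @addI Γ t r T a b ht hr iht ihr =>
    cases hT : canon T with
    | zero => simp only [canon, hT]; exact GoodO.zero
    | sm c k =>
      simp only [canon, hT]
      by_cases hz : (a + b) * c = 0
      · rw [norm, if_pos hz]; exact GoodO.zero
      · rw [norm, if_neg hz]
        refine GoodO.sm _ ?_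
        by_cases hac : a * c = 0
        · have hbc : ¬ b * c = 0 := by
            intro hbc
            exact hz (by rw [add_mul, hac, hbc, add_zero])
          have := ihr hΓ
          have hsm : canon (STy.smul b T) = SkelO.sm (b * c) k := by
            simp [canon, hT, norm, hbc]
          rw [hsm] at this
          cases this with
          | sm _ hk => exact hk
        · have := iht hΓ
          have hsm : canon (STy.smul a T) = SkelO.sm (a * c) k := by
            simp [canon, hT, norm, hac]
          rw [hsm] at this
          cases this with
          | sm _ hk => exact hk
  | @smulI Γ t T a ht ih =>
    have hg := ih hΓ
    cases hT : canon T with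
    | zero => simp only [canon, hT]; exact GoodO.zero
    | sm c k =>
      simp only [canon, hT]
      rw [hT] at hg
      cases hg with
      | sm _ hk => exact goodO_norm hk

lemma typ_zero_sc {Γ : List (STy S)} {s : Trm S} {T : STy S} (h : Typ Γ s T)
    (hs : s = Trm.zero) : sc T = 0 := by
  induction h with
  | ax _ => cases hs
  | equiv _ he ih => rw [← sc_SEq he]; exact ih hs
  | arrE _ _ _ _ => cases hs
  | arrI _ _ _ => cases hs
  | allE _ hU ih => rw [sc_substTV hU]; exact ih hs
  | allI _ ih => simpa [sc] using ih hs
  | ax0 => rfl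
  | addI _ _ _ _ => cases hs
  | smulI _ _ _ => cases hs

lemma typ_zapp_sc {Γ : List (STy S)} {s : Trm S} {T : STy S} (h : Typ Γ s T)
    (hΓ : ∀ U ∈ Γ, STy.IsUnit U)
    (hs : ∃ u r : Trm S, s = Trm.app u r ∧ (u = Trm.zero ∨ r = Trm.zero)) :
    sc T = 0 := by
  induction h with
  | ax _ => obtain ⟨u, r, heq, -⟩ := hs; cases heq
  | equiv _ he ih => rw [← sc_SEq he]; exact ih hΓ hs
  | @arrE Γ t r U T a b ht hr iht ihr =>
    obtain ⟨u, v, heq, hor⟩ := hs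
    injection heq with h1 h2
    subst h1; subst h2
    rcases hor with hu | hv
    · subst hu
      have ha : a = 0 := by
        have := typ_zero_sc ht rfl
        simpa [sc] using this
      simp [sc, ha]
    · subst hv
      have hb : b * sc U = 0 := by
        have := typ_zero_sc hr rfl
        simpa [sc] using this
      by_cases h1 : (1 : S) = 0
      · calc sc (STy.smul (a * b) T) = sc (STy.smul (a * b) T) * 1 := (mul_one _).symm
          _ = 0 := by rw [h1, mul_zero]
      · by_cases ha : a = 0
        · simp [sc, ha]
        · have hgt := typ_good ht hΓ
          have harr : canon (STy.arrow U T) =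
              SkelO.sm 1 (Skel.arr (canon U) (canon T)) := by
            simp [canon, norm, h1]
          have hsm : canon (STy.smul a (STy.arrow U T)) =
              SkelO.sm a (Skel.arr (canon U) (canon T)) := by
            simp [canon, harr, norm, ha, h1]
          rw [hsm] at hgt
          generalize hU2 : canon U = dU at hgt
          cases hgt with
          | sm _ hk =>
            cases hk with
            | arr hk₁ hd₂ =>
              have hscU : sc U = 1 := by
                have h' := scO_canon U
                rw [hU2] at h'
                exact h'.symm
              rw [hscU, mul_one] at hb
              simp [sc, hb]
  | arrI _ _ _ => obtain ⟨u, r, heq, -⟩ := hs; cases heq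
  | allE _ hU ih => rw [sc_substTV hU]; exact ih hΓ hs
  | @allI Γ t T ht ih =>
    have : ∀ U ∈ Γ.map (STy.shiftTV 1 0), STy.IsUnit U := by
      intro V hV
      rcases List.mem_map.1 hV with ⟨W, hW, rfl⟩
      exact (unitwf_shift 1 W 0).1 (hΓ W hW)
    simpa [sc] using ih this hs
  | ax0 => obtain ⟨u, r, heq, -⟩ := hs; cases heq
  | addI _ _ _ _ => obtain ⟨u, r, heq, -⟩ := hs; cases heq
  | smulI _ _ _ => obtain ⟨u, r, heq, -⟩ := hs; cases heq

end Aux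


/-- **Linearity of `0`.**
(1) If `Γ ⊢ (0) t : T` then `T ≡ 0̄`; (2) if `Γ ⊢ (t) 0 : T` then `T ≡ 0̄`. -/
theorem linearity_of_zero {S : Type} [CommRing S] (t : Trm S)
    (Γ : List (STy S)) (T : STy S)
    (hΓ : ∀ U ∈ Γ, STy.IsUnit U) (hT : STy.WF T) :
    (Typ Γ (Trm.app Trm.zero t) T → SEq T STy.zero) ∧
    (Typ Γ (Trm.app t Trm.zero) T → SEq T STy.zero) := by
  constructor
  · intro h
    exact SEq_zero_of_sc (typ_zapp_sc h hΓ ⟨_, _, rfl, Or.inl rfl⟩)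
  · intro h
    exact SEq_zero_of_sc (typ_zapp_sc h hΓ ⟨_, _, rfl, Or.inr rfl⟩)

end Lineal
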